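/- arXiv:2106.04227 — 5 statements merged into one kernel-verified Lean document; each statement's English description precedes it below -/
import Mathlib

section
/- For every quaternion q, μ(q)² + ν(q)²·q = 1. -/
open Quaternion

noncomputable def mu (q : ℍ[ℝ]) : ℍ[ℝ] :=
  ∑' m : ℕ, ((-1 : ℝ) ^ m / ((2 * m).factorial : ℝ)) • q ^ m

noncomputable def nu (q : ℍ[ℝ]) : ℍ[ℝ] :=
  ∑' m : ℕ, ((-1 : ℝ) ^ m / ((2 * m + 1).factorial : ℝ)) • q ^ m

open Finset in
lemma sum_range_parity {M : Type*} [AddCommMonoid M] (f : ℕ → M) (n : ℕ) :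
    ∑ j ∈ range (2 * n + 1), f j
      = ∑ k ∈ range (n + 1), f (2 * k) + ∑ k ∈ range n, f (2 * k + 1) := by
  induction n with
  | zero => simp
  | succ n ih =>
    have e1 : ∑ j ∈ range (2 * (n + 1) + 1), f j
        = ∑ j ∈ range (2 * n + 1), f j + f (2 * n + 1) + f (2 * n + 2) := by
      rw [show 2 * (n + 1) + 1 = (2 * n + 1) + 1 + 1 by ring, sum_range_succ, sum_range_succ]
    have e2 : ∑ k ∈ range (n + 1 + 1), f (2 * k)
        = ∑ k ∈ range (n + 1), f (2 * k) + f (2 * n + 2) := by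
      rw [sum_range_succ, show 2 * (n + 1) = 2 * n + 2 by ring]
    have e3 : ∑ k ∈ range (n + 1), f (2 * k + 1)
        = ∑ k ∈ range n, f (2 * k + 1) + f (2 * n + 1) := by
      rw [sum_range_succ]
    rw [e1, e2, e3, ih]
    abel

lemma alt_factorial_sum (M : ℕ) (hM : M ≠ 0) :
    ∑ j ∈ Finset.range (M + 1),
      (-1 : ℝ) ^ j / ((j.factorial : ℝ) * ((M - j).factorial : ℝ)) = 0 := by
  have h : ∀ j ∈ Finset.range (M + 1),
      (-1 : ℝ) ^ j / ((j.factorial : ℝ) * ((M - j).factorial : ℝ))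
        = ((-1 : ℝ) ^ j * (M.choose j : ℝ)) / (M.factorial : ℝ) := by
    intro j hj
    rw [Nat.cast_choose ℝ (Nat.lt_succ_iff.mp (Finset.mem_range.mp hj))]
    have h1 : ((j.factorial : ℝ) * ((M - j).factorial : ℝ)) ≠ 0 := by
      positivity
    have h2 : (M.factorial : ℝ) ≠ 0 := by positivity
    field_simp
  rw [Finset.sum_congr rfl h, ← Finset.sum_div]
  have hz := Int.alternating_sum_range_choose (n := M)
  rw [if_neg hM] at hz
  have hz' : ∑ j ∈ Finset.range (M + 1), (-1 : ℝ) ^ j * (M.choose j : ℝ) = 0 := by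
    exact_mod_cast congrArg (fun z : ℤ => (z : ℝ)) hz
  rw [hz', zero_div]

open Finset in
lemma key_identity (N : ℕ) :
    ∑ ij ∈ Finset.HasAntidiagonal.antidiagonal (N + 1),
        (1 : ℝ) / (((2 * ij.1).factorial : ℝ) * ((2 * ij.2).factorial : ℝ))
      = ∑ ij ∈ Finset.HasAntidiagonal.antidiagonal N,
        (1 : ℝ) / (((2 * ij.1 + 1).factorial : ℝ) * ((2 * ij.2 + 1).factorial : ℝ)) := by
  rw [Finset.Nat.sum_antidiagonal_eq_sum_range_succ_mk,
    Finset.Nat.sum_antidiagonal_eq_sum_range_succ_mk]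
  have h0 := alt_factorial_sum (2 * N + 2) (by omega)
  rw [show 2 * N + 2 + 1 = 2 * (N + 1) + 1 by ring, sum_range_parity] at h0
  have hE : ∑ k ∈ range (N + 1 + 1),
      (-1 : ℝ) ^ (2 * k) / (((2 * k).factorial : ℝ) * (((2 * N + 2) - 2 * k).factorial : ℝ))
      = ∑ k ∈ range (N + 1 + 1),
      (1 : ℝ) / (((2 * k).factorial : ℝ) * ((2 * (N + 1 - k)).factorial : ℝ)) := by
    refine Finset.sum_congr rfl fun k hk => ?_
    have hk' : k ≤ N + 1 := Nat.lt_succ_iff.mp (Finset.mem_range.mp hk)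
    have h1 : (2 * N + 2) - 2 * k = 2 * (N + 1 - k) := by omega
    have h2 : (-1 : ℝ) ^ (2 * k) = 1 := by
      rw [pow_mul]; norm_num
    rw [h1, h2]
  have hO : ∑ k ∈ range (N + 1),
      (-1 : ℝ) ^ (2 * k + 1) / (((2 * k + 1).factorial : ℝ) *
        (((2 * N + 2) - (2 * k + 1)).factorial : ℝ))
      = - ∑ k ∈ range (N + 1),
      (1 : ℝ) / (((2 * k + 1).factorial : ℝ) * ((2 * (N - k) + 1).factorial : ℝ)) := by
    rw [← Finset.sum_neg_distrib]
    refine Finset.sum_congr rfl fun k hk => ?_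
    have hk' : k ≤ N := Nat.lt_succ_iff.mp (Finset.mem_range.mp hk)
    have h1 : (2 * N + 2) - (2 * k + 1) = 2 * (N - k) + 1 := by omega
    have h2 : (-1 : ℝ) ^ (2 * k + 1) = -1 := by
      rw [pow_succ, pow_mul]; norm_num
    rw [h1, h2]
    ring
  rw [hE, hO] at h0
  linarith

open Finset in
theorem mu_sq_add_nu_sq_mul (q : ℍ[ℝ]) : mu q ^ 2 + nu q ^ 2 * q = 1 := by
  classical
  set a : ℕ → ℍ[ℝ] := fun m => ((-1 : ℝ) ^ m / ((2 * m).factorial : ℝ)) • q ^ m with ha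
  set b : ℕ → ℍ[ℝ] := fun m => ((-1 : ℝ) ^ m / ((2 * m + 1).factorial : ℝ)) • q ^ m with hb
  -- summability in norm
  have hnorm : ∀ (c : ℕ → ℝ), (∀ m, |c m| ≤ 1 / (m.factorial : ℝ)) →
      Summable (fun m => ‖c m • q ^ m‖) := by
    intro c hc
    refine Summable.of_nonneg_of_le (fun m => norm_nonneg _) (fun m => ?_)
      (Real.summable_pow_div_factorial ‖q‖)
    rw [norm_smul, norm_pow, Real.norm_eq_abs]
    calc |c m| * ‖q‖ ^ m ≤ (1 / (m.factorial : ℝ)) * ‖q‖ ^ m := by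
          gcongr; exact hc m
      _ = ‖q‖ ^ m / (m.factorial : ℝ) := by ring
  have hfa : ∀ m : ℕ, |(-1 : ℝ) ^ m / ((2 * m).factorial : ℝ)| ≤ 1 / (m.factorial : ℝ) := by
    intro m
    rw [abs_div, abs_pow, abs_neg, abs_one, one_pow, abs_of_nonneg (by positivity)]
    apply one_div_le_one_div_of_le (by positivity)
    exact_mod_cast Nat.factorial_le (by omega)
  have hfb : ∀ m : ℕ, |(-1 : ℝ) ^ m / ((2 * m + 1).factorial : ℝ)| ≤ 1 / (m.factorial : ℝ) := by
    intro m
    rw [abs_div, abs_pow, abs_neg, abs_one, one_pow, abs_of_nonneg (by positivity)]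
    apply one_div_le_one_div_of_le (by positivity)
    exact_mod_cast Nat.factorial_le (by omega)
  have hA : Summable (fun m => ‖a m‖) := hnorm _ hfa
  have hB : Summable (fun m => ‖b m‖) := hnorm _ hfb
  -- Cauchy products
  have hmu : mu q = ∑' m, a m := rfl
  have hnu : nu q = ∑' m, b m := rfl
  have hmul1 : mu q ^ 2 = ∑' n, ∑ kl ∈ antidiagonal n, a kl.1 * a kl.2 := by
    rw [sq, hmu, tsum_mul_tsum_eq_tsum_sum_antidiagonal_of_summable_norm hA hA]
  have hmul2 : nu q ^ 2 = ∑' n, ∑ kl ∈ antidiagonal n, b kl.1 * b kl.2 := by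
    rw [sq, hnu, tsum_mul_tsum_eq_tsum_sum_antidiagonal_of_summable_norm hB hB]
  set f : ℕ → ℍ[ℝ] := fun n => ∑ kl ∈ antidiagonal n, a kl.1 * a kl.2 with hf
  set g : ℕ → ℍ[ℝ] := fun n => ∑ kl ∈ antidiagonal n, b kl.1 * b kl.2 with hg
  have hFsum : Summable f :=
    (summable_norm_sum_mul_antidiagonal_of_summable_norm hA hA).of_norm
  have hGsum : Summable g :=
    (summable_norm_sum_mul_antidiagonal_of_summable_norm hB hB).of_norm
  -- closed forms for f and g
  have hfn : ∀ n, f n = ((-1 : ℝ) ^ n *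
      ∑ ij ∈ antidiagonal n,
        (1 : ℝ) / (((2 * ij.1).factorial : ℝ) * ((2 * ij.2).factorial : ℝ))) • q ^ n := by
    intro n
    rw [hf, Finset.mul_sum, Finset.sum_smul]
    refine Finset.sum_congr rfl fun ij hij => ?_
    have hij' : ij.1 + ij.2 = n := Finset.HasAntidiagonal.mem_antidiagonal.mp hij
    simp only [ha]
    rw [smul_mul_assoc, mul_smul_comm, smul_smul, ← pow_add, hij']
    congr 1
    rw [← hij', pow_add]
    field_simp
  have hgn : ∀ n, g n = ((-1 : ℝ) ^ n *
      ∑ ij ∈ antidiagonal n,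
        (1 : ℝ) / (((2 * ij.1 + 1).factorial : ℝ) * ((2 * ij.2 + 1).factorial : ℝ))) • q ^ n := by
    intro n
    rw [hg, Finset.mul_sum, Finset.sum_smul]
    refine Finset.sum_congr rfl fun ij hij => ?_
    have hij' : ij.1 + ij.2 = n := Finset.HasAntidiagonal.mem_antidiagonal.mp hij
    simp only [hb]
    rw [smul_mul_assoc, mul_smul_comm, smul_smul, ← pow_add, hij']
    congr 1
    rw [← hij', pow_add]
    field_simp
  have hf0 : f 0 = 1 := by
    rw [hfn 0]
    simp
  -- shift and combine
  have hshift : mu q ^ 2 = f 0 + ∑' n, f (n + 1) := by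
    rw [hmul1]; exact Summable.tsum_eq_zero_add hFsum
  have hFsum' : Summable (fun n => f (n + 1)) := (summable_nat_add_iff 1).mpr hFsum
  have hnuq : nu q ^ 2 * q = ∑' n, g n * q := by
    rw [hmul2]; exact (Summable.tsum_mul_right q hGsum).symm
  have hGsum' : Summable (fun n => g n * q) := Summable.mul_right q hGsum
  have hzero : ∀ n : ℕ, f (n + 1) + g n * q = 0 := by
    intro n
    rw [hfn (n + 1), hgn n, key_identity n, smul_mul_assoc, ← pow_succ, ← add_smul]
    have : (-1 : ℝ) ^ (n + 1) = -((-1 : ℝ) ^ n) := by ring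
    rw [this]
    rw [show -(-1 : ℝ) ^ n *
        (∑ ij ∈ antidiagonal n,
          (1 : ℝ) / (((2 * ij.1 + 1).factorial : ℝ) * ((2 * ij.2 + 1).factorial : ℝ)))
        + (-1 : ℝ) ^ n *
        (∑ ij ∈ antidiagonal n,
          (1 : ℝ) / (((2 * ij.1 + 1).factorial : ℝ) * ((2 * ij.2 + 1).factorial : ℝ))) = 0
      by ring, zero_smul]
  calc mu q ^ 2 + nu q ^ 2 * q
      = f 0 + (∑' n, f (n + 1) + ∑' n, g n * q) := by
        rw [hshift, hnuq, add_assoc]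
    _ = f 0 + ∑' n, (f (n + 1) + g n * q) := by
        rw [Summable.tsum_add hFsum' hGsum']
    _ = 1 := by
        simp only [hzero, tsum_zero, add_zero, hf0]
end

section
/- Let f : ℂ → ℂ be the map f(z) = cos(√z), understood as the entire function f(z) = Σ_{m≥0} (-1)^m z^m/(2m)!. Then f restricted to the region D₀ = { x + iy : x < π² - y²/(4π²) } is a bijection onto ℂ \ (-∞, -1]. -/
open Complex

/-- The entire function `f(z) = Σ (-1)^m z^m/(2m)!`, i.e. `cos √z`. -/
noncomputable def cosSqrt (z : ℂ) : ℂ :=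
  ∑' m : ℕ, ((-1 : ℂ) ^ m / ((2 * m).factorial : ℂ)) * z ^ m

lemma cosSqrt_sq (w : ℂ) : cosSqrt (w ^ 2) = Complex.cos w := by
  rw [← (Complex.hasSum_cos w).tsum_eq]
  unfold cosSqrt
  refine tsum_congr fun m => ?_
  rw [← pow_mul]
  ring

/-- membership in the parabolic region in terms of a square root -/
lemma mem_D_iff (w : ℂ) :
    ((w ^ 2).re < Real.pi ^ 2 - (w ^ 2).im ^ 2 / (4 * Real.pi ^ 2)) ↔ w.re ^ 2 < Real.pi ^ 2 := by
  have hπ : (0:ℝ) < Real.pi := Real.pi_pos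
  have h1 : (w ^ 2).re = w.re ^ 2 - w.im ^ 2 := by
    rw [pow_two, Complex.mul_re]; ring
  have h2 : (w ^ 2).im = 2 * w.re * w.im := by
    rw [pow_two, Complex.mul_im]; ring
  have hA : (2 * w.re * w.im) ^ 2 / (4 * Real.pi ^ 2) * (4 * Real.pi ^ 2)
      = (2 * w.re * w.im) ^ 2 := div_mul_cancel₀ _ (by positivity)
  rw [h1, h2]
  have hp4 : (0:ℝ) < 4 * Real.pi ^ 2 := by positivity
  constructor
  · intro h
    nlinarith [sq_nonneg w.im, sq_nonneg (w.re * w.im), mul_pos hπ hπ]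
  · intro h
    nlinarith [sq_nonneg w.im, sq_nonneg (w.re * w.im), mul_pos hπ hπ]

/-- classification of equal cosines -/
lemma cos_eq_cos_cases {a b : ℂ} (h : Complex.cos a = Complex.cos b) :
    (∃ k : ℤ, a + b = 2 * k * Real.pi) ∨ (∃ k : ℤ, a - b = 2 * k * Real.pi) := by
  have h0 : Complex.cos a - Complex.cos b = 0 := by rw [h, sub_self]
  rw [Complex.cos_sub_cos] at h0
  rcases mul_eq_zero.1 h0 with h1 | h2
  · rcases mul_eq_zero.1 h1 with h3 | h4
    · exfalso; norm_num at h3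
    · left
      rcases Complex.sin_eq_zero_iff.1 h4 with ⟨k, hk⟩
      exact ⟨k, by linear_combination 2 * hk⟩
  · right
    rcases Complex.sin_eq_zero_iff.1 h2 with ⟨k, hk⟩
    exact ⟨k, by linear_combination 2 * hk⟩

lemma k_zero {k : ℤ} {x : ℝ} (h : x = 2 * k * Real.pi) (hx : |x| < 2 * Real.pi) : k = 0 := by
  by_contra hne
  have h1 : (1:ℝ) ≤ |(k:ℝ)| := by exact_mod_cast Int.one_le_abs hne
  have hπ : (0:ℝ) < Real.pi := Real.pi_pos
  rw [h] at hx
  have habs : |2 * (k:ℝ) * Real.pi| = 2 * |(k:ℝ)| * Real.pi := by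
    rw [abs_mul, abs_of_pos hπ, abs_mul, _root_.abs_two]
  rw [habs] at hx
  nlinarith

lemma sqrt_exists (z : ℂ) : ∃ w : ℂ, w ^ 2 = z :=
  ⟨z ^ ((2:ℂ)⁻¹), by
    have := Complex.cpow_nat_inv_pow z (two_ne_zero)
    simpa using this⟩ -- sqrt

/-- cos of a strip value is not in `(-∞,-1]` -/
lemma cos_not_in_slit {w : ℂ} (hw : |w.re| < Real.pi) :
    ¬ ((Complex.cos w).im = 0 ∧ (Complex.cos w).re ≤ -1) := by
  rintro ⟨him, hre⟩
  set c : ℝ := (Complex.cos w).re with hc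
  have hπ : (0:ℝ) < Real.pi := Real.pi_pos
  have hwre := abs_lt.1 hw
  have h1le : (1:ℝ) ≤ -c := by linarith
  -- find t with cosh t = -c
  have hex : ∃ t : ℝ, Real.cosh t = -c := by
    set M : ℝ := Real.log (2 * (-c)) with hM
    have hpos : (0:ℝ) < 2 * (-c) := by linarith
    have hMexp : Real.exp M = 2 * (-c) := Real.exp_log hpos
    have hMge : -c ≤ Real.cosh M := by
      rw [Real.cosh_eq, hMexp]
      have := (Real.exp_pos (-M)).le
      linarith
    have h0M : (0:ℝ) ≤ M := Real.log_nonneg (by linarith)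
    have hcont : ContinuousOn Real.cosh (Set.Icc 0 M) := Real.continuous_cosh.continuousOn
    have hmem : -c ∈ Set.Icc (Real.cosh 0) (Real.cosh M) :=
      ⟨by rw [Real.cosh_zero]; exact h1le, hMge⟩
    rcases intermediate_value_Icc h0M hcont hmem with ⟨t, _, ht⟩
    exact ⟨t, ht⟩
  rcases hex with ⟨t, ht⟩
  have hcw : Complex.cos w = (c : ℂ) := by
    apply Complex.ext <;> simp [him, hc]
  have hcb : Complex.cos ((Real.pi : ℂ) + (t : ℂ) * Complex.I) = (c : ℂ) := by
    rw [Complex.cos_add, Complex.cos_pi, Complex.sin_pi, Complex.cos_mul_I,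
      ← Complex.ofReal_cosh, ht]
    push_cast
    ring
  have heq : Complex.cos w = Complex.cos ((Real.pi : ℂ) + (t : ℂ) * Complex.I) := by
    rw [hcw, hcb]
  rcases cos_eq_cos_cases heq with ⟨k, hk⟩ | ⟨k, hk⟩
  · have hkre : w.re + Real.pi = 2 * k * Real.pi := by
      have := congrArg Complex.re hk
      simpa using this
    have hk0 : k = 0 := k_zero hkre (by rw [abs_lt]; constructor <;> linarith)
    rw [hk0] at hkre
    simp at hkre
    linarith
  · have hkre : w.re - Real.pi = 2 * k * Real.pi := by
      have := congrArg Complex.re hk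
      simpa using this
    have hk0 : k = 0 := k_zero hkre (by rw [abs_lt]; constructor <;> linarith)
    rw [hk0] at hkre
    simp at hkre
    linarith

theorem cosSqrt_bijOn :
    Set.BijOn cosSqrt
      {z : ℂ | z.re < Real.pi ^ 2 - z.im ^ 2 / (4 * Real.pi ^ 2)}
      ({w : ℂ | w.im = 0 ∧ w.re ≤ -1}ᶜ) := by
  have hπ : (0:ℝ) < Real.pi := Real.pi_pos
  have hroot : ∀ z : ℂ, z.re < Real.pi ^ 2 - z.im ^ 2 / (4 * Real.pi ^ 2) →
      ∃ w : ℂ, w ^ 2 = z ∧ |w.re| < Real.pi := by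
    intro z hz
    rcases sqrt_exists z with ⟨w, hw⟩
    refine ⟨w, hw, ?_⟩
    rw [← hw] at hz
    have := (mem_D_iff w).1 hz
    rw [abs_lt]
    constructor <;> nlinarith
  refine ⟨?_, ?_, ?_⟩
  · -- MapsTo
    intro z hz
    rcases hroot z hz with ⟨w, hw, hwre⟩
    rw [← hw, cosSqrt_sq]
    exact cos_not_in_slit hwre
  · -- InjOn
    intro z₁ h₁ z₂ h₂ heq
    rcases hroot z₁ h₁ with ⟨w₁, hw₁, hre₁⟩
    rcases hroot z₂ h₂ with ⟨w₂, hw₂, hre₂⟩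
    rw [← hw₁, ← hw₂, cosSqrt_sq, cosSqrt_sq] at heq
    rw [← hw₁, ← hw₂]
    rcases abs_lt.1 hre₁ with ⟨a1, a2⟩
    rcases abs_lt.1 hre₂ with ⟨b1, b2⟩
    rcases cos_eq_cos_cases heq with ⟨k, hk⟩ | ⟨k, hk⟩
    · have hkre : w₁.re + w₂.re = 2 * k * Real.pi := by
        have := congrArg Complex.re hk; simpa using this
      have hk0 : k = 0 := k_zero hkre (by rw [abs_lt]; constructor <;> linarith)
      rw [hk0] at hk
      push_cast at hk
      have : w₁ = -w₂ := by linear_combination hk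
      rw [this]; ring
    · have hkre : w₁.re - w₂.re = 2 * k * Real.pi := by
        have := congrArg Complex.re hk; simpa using this
      have hk0 : k = 0 := k_zero hkre (by rw [abs_lt]; constructor <;> linarith)
      rw [hk0] at hk
      push_cast at hk
      have : w₁ = w₂ := by linear_combination hk
      rw [this]
  · -- SurjOn
    intro c hc
    simp only [Set.mem_compl_iff, Set.mem_setOf_eq] at hc
    push_neg at hc
    rcases sqrt_exists (c ^ 2 - 1) with ⟨s, hs⟩
    set ζ : ℂ := c + s with hζ
    have hζne : ζ ≠ 0 := by
      intro h
      have hs' : s = -c := by rw [hζ] at h; linear_combination h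
      rw [hs'] at hs
      have : (1:ℂ) = 0 := by linear_combination hs
      norm_num at this
    have hquad : ζ ^ 2 - 2 * c * ζ + 1 = 0 := by
      rw [hζ]; linear_combination hs
    have hinv : ζ⁻¹ = 2 * c - ζ :=
      inv_eq_of_mul_eq_one_right (by linear_combination -hquad)
    set v : ℂ := -Complex.I * Complex.log ζ with hv
    have hvI : v * Complex.I = Complex.log ζ := by
      rw [hv]
      have : -Complex.I * Complex.log ζ * Complex.I = -(Complex.I * Complex.I) * Complex.log ζ := by
        ring
      rw [this, Complex.I_mul_I]
      ring
    have hcosv : Complex.cos v = c := by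
      rw [Complex.cos]
      have h2 : -v * Complex.I = -(Complex.log ζ) := by rw [← hvI]; ring
      rw [hvI, h2, Complex.exp_log hζne, Complex.exp_neg, Complex.exp_log hζne, hinv]
      ring
    have hrev : v.re = ζ.arg := by
      rw [hv]
      simp [Complex.log_im]
    have hvre : |v.re| < Real.pi := by
      rw [hrev, abs_lt]
      refine ⟨Complex.neg_pi_lt_arg ζ, lt_of_le_of_ne (Complex.arg_le_pi ζ) ?_⟩
      intro h
      rw [Complex.arg_eq_pi_iff] at h
      obtain ⟨hneg, him0⟩ := h
      set r : ℝ := ζ.re with hr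
      have hζr : ζ = (r : ℂ) := by
        apply Complex.ext <;> simp [him0, hr]
      have hrneg : r < 0 := hneg
      have hrne : r ≠ 0 := hrneg.ne
      have h2c : (2:ℂ) * c = (r:ℂ) + (r:ℂ)⁻¹ := by
        rw [← hζr]
        rw [show ζ + ζ⁻¹ = ζ + (2 * c - ζ) from by rw [hinv]]
        ring
      have hcr : c = (((r + r⁻¹) / 2 : ℝ) : ℂ) := by
        push_cast
        linear_combination h2c / 2
      have him : c.im = 0 := by rw [hcr]; simp
      have hrekey : r + r⁻¹ ≤ -2 := by
        have h1 : (r + 1) ^ 2 / r ≤ 0 :=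
          div_nonpos_of_nonneg_of_nonpos (sq_nonneg _) hrneg.le
        have h2 : r + r⁻¹ + 2 = (r + 1) ^ 2 / r := by
          field_simp
          ring
        linarith
      have hre : c.re ≤ -1 := by
        rw [hcr]
        simp only [Complex.ofReal_re]
        linarith
      exact absurd (hc him) (not_lt.2 hre)
    refine ⟨v ^ 2, ?_, ?_⟩
    · simp only [Set.mem_setOf_eq]
      rw [mem_D_iff]
      rcases abs_lt.1 hvre with ⟨hv1, hv2⟩
      nlinarith
    · rw [cosSqrt_sq, hcosv]
end

section
/- The squaring map z ↦ z² is a bijection from the strip {x + iy ∈ ℂ : 0 < x < π} onto D₀ \ (-∞, 0], where D₀ = { x + iy : x < π² - y²/(4π²) }. -/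
open Complex

lemma key_iff (x y : ℝ) (hx : 0 < x) :
    x ^ 2 - y ^ 2 < Real.pi ^ 2 - (2 * x * y) ^ 2 / (4 * Real.pi ^ 2) ↔ x < Real.pi := by
  have hπ : (0:ℝ) < Real.pi := Real.pi_pos
  rw [show Real.pi ^ 2 - (2 * x * y) ^ 2 / (4 * Real.pi ^ 2)
      = (Real.pi ^ 2 * (4 * Real.pi ^ 2) - (2 * x * y) ^ 2) / (4 * Real.pi ^ 2) by
    field_simp, lt_div_iff₀ (by positivity)]
  constructor
  · intro h
    by_contra hle
    push_neg at hle
    have h4 : (0:ℝ) < 4 * Real.pi ^ 2 + 4 * y ^ 2 := by positivity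
    have := mul_le_mul_of_nonneg_right (show Real.pi ^ 2 ≤ x ^ 2 by nlinarith) h4.le
    nlinarith
  · intro h
    have h4 : (0:ℝ) < 4 * Real.pi ^ 2 + 4 * y ^ 2 := by positivity
    have := mul_lt_mul_of_pos_right (show x ^ 2 < Real.pi ^ 2 by nlinarith) h4
    nlinarith

lemma sq_re' (z : ℂ) : (z ^ 2).re = z.re ^ 2 - z.im ^ 2 := by
  simp [pow_two, Complex.mul_re]

lemma sq_im' (z : ℂ) : (z ^ 2).im = 2 * z.re * z.im := by
  simp [pow_two, Complex.mul_im]; ring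

theorem sq_bijOn_strip :
    Set.BijOn (fun z : ℂ => z ^ 2)
      {z : ℂ | 0 < z.re ∧ z.re < Real.pi}
      ({z : ℂ | z.re < Real.pi ^ 2 - z.im ^ 2 / (4 * Real.pi ^ 2)} \
        {w : ℂ | w.im = 0 ∧ w.re ≤ 0}) := by
  refine ⟨?_, ?_, ?_⟩
  · -- MapsTo
    rintro z ⟨h0, hπ⟩
    refine ⟨?_, ?_⟩
    · show (z ^ 2).re < Real.pi ^ 2 - (z ^ 2).im ^ 2 / (4 * Real.pi ^ 2)
      rw [sq_re', sq_im']
      exact (key_iff z.re z.im h0).mpr hπ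
    · rintro ⟨h1, h2⟩
      rw [sq_im'] at h1
      have hy : z.im = 0 := by
        rcases mul_eq_zero.mp h1 with h | h
        · rcases mul_eq_zero.mp h with h | h
          · norm_num at h
          · linarith
        · exact h
      rw [sq_re', hy] at h2
      nlinarith
  · -- InjOn
    rintro z1 ⟨h1, _⟩ z2 ⟨h2, _⟩ heq
    simp only at heq
    have : (z1 - z2) * (z1 + z2) = 0 := by linear_combination heq
    rcases mul_eq_zero.mp this with h | h
    · exact sub_eq_zero.mp h
    · exfalso
      have : z1 = -z2 := by linear_combination h
      have : z1.re = -z2.re := by rw [this]; simp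
      linarith
  · -- SurjOn
    rintro w ⟨hw1, hw2⟩
    have hw0 : w ≠ 0 := by
      rintro rfl
      exact hw2 ⟨rfl, le_refl 0⟩
    set z := Complex.exp (Complex.log w / 2) with hz
    have hz2 : z ^ 2 = w := by
      rw [hz, sq, ← Complex.exp_add, add_halves, Complex.exp_log hw0]
    have harg_lt : Complex.arg w < Real.pi := by
      rcases lt_or_eq_of_le (Complex.arg_le_pi w) with h | h
      · exact h
      · exfalso
        rw [Complex.arg_eq_pi_iff] at h
        exact hw2 ⟨h.2, h.1.le⟩
    have harg_gt : -Real.pi < Complex.arg w := Complex.neg_pi_lt_arg w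
    have him : (Complex.log w / 2).im = Complex.arg w / 2 := by
      rw [Complex.div_im]
      simp [Complex.log_im]
      ring
    have hre : 0 < z.re := by
      rw [hz, Complex.exp_re, him]
      have : 0 < Real.cos (Complex.arg w / 2) := by
        apply Real.cos_pos_of_mem_Ioo
        constructor <;> [linarith; linarith]
      positivity
    have hπ' : z.re < Real.pi := by
      apply (key_iff z.re z.im hre).mp
      rw [← sq_re' z, ← sq_im' z, hz2]
      exact hw1
    exact ⟨z, ⟨hre, hπ'⟩, hz2⟩
end

section
/- Let U ⊆ ℂ be a connected open set, and let a₀, a₁ : U → ℂ be holomorphic functions with a₀² + a₁² ≡ 1. If U is simply connected, then there exists a holomorphic γ : U → ℂ with cos(γ) = a₀ and sin(γ) = a₁. -/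
open Complex Set unitInterval

open Complex Set

lemma aux_div_slit {z w : ℂ} (hw : w ≠ 0) (h : dist z w < ‖w‖) :
    z / w ∈ Complex.slitPlane := by
  have h1 : ‖z / w - 1‖ < 1 := by
    rw [div_sub_one hw, norm_div]
    rw [div_lt_one (by simpa using hw)]
    simpa [dist_eq_norm] using h
  rw [Complex.mem_slitPlane_iff]
  left
  have h2 := Complex.abs_re_le_norm (z / w - 1)
  have h3 : (z/w - 1).re = (z/w).re - 1 := by simp
  nlinarith [abs_nonneg ((z/w - 1).re), le_abs_self ((z/w-1).re), neg_abs_le ((z/w-1).re)]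

lemma aux_lift_unique {q₁ q₂ : ℝ → ℂ} (h₁ : Continuous q₁) (h₂ : Continuous q₂)
    (h0 : q₁ 0 = q₂ 0) (h : ∀ t ∈ Icc (0:ℝ) 1, Complex.exp (q₁ t) = Complex.exp (q₂ t)) :
    q₁ 1 = q₂ 1 := by
  set u : ℝ → ℝ := fun t => ((q₁ t - q₂ t) / (2 * Real.pi * Complex.I)).re with hu
  have hI : (2 * (Real.pi:ℂ) * Complex.I) ≠ 0 := by
    simp [Real.pi_ne_zero, Complex.I_ne_zero]
  have hcu : Continuous u := Complex.continuous_re.comp ((h₁.sub h₂).div_const _)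
  have key : ∀ t ∈ Icc (0:ℝ) 1, ∃ n : ℤ, u t = n ∧ q₁ t - q₂ t = n * (2 * Real.pi * Complex.I) := by
    intro t ht
    obtain ⟨n, hn⟩ := Complex.exp_eq_exp_iff_exists_int.mp (h t ht)
    refine ⟨n, ?_, by rw [hn]; ring⟩
    have : (q₁ t - q₂ t) / (2 * Real.pi * Complex.I) = (n:ℂ) := by
      rw [hn]; field_simp; ring
    rw [hu]; simp [this]
  obtain ⟨n₀, hn₀, he₀⟩ := key 0 (by norm_num)
  obtain ⟨n₁, hn₁, he₁⟩ := key 1 (by norm_num)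
  have hsame : n₀ = n₁ := by
    by_contra hne
    have hiv : ∀ c : ℝ, c ∈ Icc (u 0) (u 1) ∪ Icc (u 1) (u 0) → ∃ t ∈ Icc (0:ℝ) 1, u t = c := by
      intro c hc
      rcases hc with hc | hc
      · obtain ⟨t, ht, h⟩ := intermediate_value_Icc (by norm_num : (0:ℝ) ≤ 1) hcu.continuousOn hc
        exact ⟨t, ht, h⟩
      · obtain ⟨t, ht, h⟩ := intermediate_value_Icc' (by norm_num : (0:ℝ) ≤ 1) hcu.continuousOn hc
        exact ⟨t, ht, h⟩
    have hmem : ∃ k : ℤ, (k:ℝ) + 1/2 ∈ Icc (u 0) (u 1) ∪ Icc (u 1) (u 0) := by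
      rcases lt_or_gt_of_ne hne with hlt | hlt
      · refine ⟨n₀, Or.inl ⟨?_, ?_⟩⟩
        · rw [hn₀]; norm_num
        · rw [hn₁]
          have : (n₀:ℝ) + 1 ≤ n₁ := by exact_mod_cast hlt
          linarith
      · refine ⟨n₁, Or.inr ⟨?_, ?_⟩⟩
        · rw [hn₁]; norm_num
        · rw [hn₀]
          have : (n₁:ℝ) + 1 ≤ n₀ := by exact_mod_cast hlt
          linarith
    obtain ⟨k, hmem⟩ := hmem
    obtain ⟨t, ht, hut⟩ := hiv _ hmem
    obtain ⟨m, hm, -⟩ := key t ht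
    rw [hm] at hut
    have h2 : (2*m : ℝ) = 2 * (k:ℝ) + 1 := by push_cast at hut ⊢; linarith
    have h3 : (2*m : ℤ) = 2 * k + 1 := by exact_mod_cast h2
    omega
  have : q₁ 1 - q₂ 1 = q₁ 0 - q₂ 0 := by rw [he₀, he₁, hsame]
  rw [h0] at this
  have := this
  linear_combination this


section
variable {p : ℝ → ℂ}

lemma aux_lift_exists (hp : Continuous p) (hne : ∀ t, p t ≠ 0) (c : ℂ)
    (hc : Complex.exp c = p 0) :
    ∃ q : ℝ → ℂ, Continuous q ∧ q 0 = c ∧ ∀ t ∈ Icc (0:ℝ) 1, Complex.exp (q t) = p t := by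
  -- minimum modulus on [0,1]
  obtain ⟨t₀, ht₀, hmin⟩ := (isCompact_Icc (a := (0:ℝ)) (b := 1)).exists_isMinOn
    (Set.nonempty_Icc.mpr zero_le_one) (hp.norm.continuousOn)
  set ε : ℝ := ‖p t₀‖ with hε
  have hεpos : 0 < ε := norm_pos_iff.mpr (hne t₀)
  -- uniform continuity
  have huc : UniformContinuousOn p (Icc 0 1) :=
    (isCompact_Icc).uniformContinuousOn_of_continuous hp.continuousOn
  rw [Metric.uniformContinuousOn_iff] at huc
  obtain ⟨δ, hδpos, hδ⟩ := huc ε hεpos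
  obtain ⟨n, hn⟩ := exists_nat_one_div_lt hδpos
  have hn1 : (1:ℝ)/(n+1) < δ := hn
  set N : ℕ := n + 1 with hN
  have hNpos : (0:ℝ) < N := by positivity
  have hNδ : (1:ℝ)/N < δ := by rw [hN]; push_cast; exact hn1
  -- key step estimate
  have hstep : ∀ s a : ℝ, a ∈ Icc (0:ℝ) 1 → s ∈ Icc a (a + 1/N) → s ∈ Icc (0:ℝ) 1 →
      p s / p a ∈ Complex.slitPlane ∧ p s / p a ≠ 0 := by
    intro s a ha hs hs01
    have hd : dist (p s) (p a) < ε := by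
      apply hδ s hs01 a ha
      rw [Real.dist_eq, abs_sub_lt_iff]
      constructor <;> [linarith [hs.2, hNδ]; linarith [hs.1, hδpos]]
    have hd2 : dist (p s) (p a) < ‖p a‖ := lt_of_lt_of_le hd (hmin ha)
    exact ⟨aux_div_slit (hne a) hd2, div_ne_zero (hne s) (hne a)⟩
  -- induction on k : lift on [0, k/N]
  have main : ∀ k : ℕ, k ≤ N → ∃ q : ℝ → ℂ, Continuous q ∧ q 0 = c ∧
      ∀ t ∈ Icc (0:ℝ) ((k:ℝ)/N), Complex.exp (q t) = p t := by
    intro k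
    induction k with
    | zero =>
      intro _
      refine ⟨fun _ => c, continuous_const, rfl, ?_⟩
      intro t ht
      simp only [Nat.cast_zero, zero_div] at ht
      have : t = 0 := le_antisymm ht.2 ht.1
      rw [this, hc]
    | succ k ih =>
      intro hk
      obtain ⟨q, hqc, hq0, hqe⟩ := ih (Nat.le_of_succ_le hk)
      set a : ℝ := (k:ℝ)/N with ha
      have ha01 : a ∈ Icc (0:ℝ) 1 := by
        constructor
        · positivity
        · rw [ha, div_le_one hNpos]
          exact_mod_cast Nat.le_of_succ_le hk
      have hb01 : a + 1/N ≤ 1 := by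
        rw [ha, ← add_div, div_le_one hNpos]
        exact_mod_cast hk
      -- clamp
      set cl : ℝ → ℝ := fun t => max a (min t (a + 1/N)) with hcl
      have hclmem : ∀ t, cl t ∈ Icc a (a + 1/N) := by
        intro t
        constructor
        · exact le_max_left _ _
        · apply max_le
          · linarith [hεpos, hNpos, one_div_pos.mpr hNpos]
          · exact min_le_right _ _
      have hcl01 : ∀ t, cl t ∈ Icc (0:ℝ) 1 := fun t =>
        ⟨le_trans ha01.1 (hclmem t).1, le_trans (hclmem t).2 hb01⟩
      have hclcont : Continuous cl := continuous_const.max (continuous_id.min continuous_const)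
      have hcla : cl a = a := by
        rw [hcl]
        simp only []
        rw [min_eq_left (by linarith [one_div_pos.mpr hNpos]), max_self]
      set br : ℝ → ℂ := fun t => q a + Complex.log (p (cl t) / p a) with hbr
      have hbrc : Continuous br := by
        refine continuous_const.add ?_
        have hratio : Continuous (fun t => p (cl t) / p a) := (hp.comp hclcont).div_const _
        rw [continuous_iff_continuousAt]
        intro t
        exact hratio.continuousAt.clog (hstep (cl t) a ha01 (hclmem t) (hcl01 t)).1
      refine ⟨fun t => if t ≤ a then q t else br t, ?_, ?_, ?_⟩
      · refine Continuous.if_le hqc hbrc continuous_id continuous_const ?_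
        intro t (ht : t = a)
        rw [ht, hbr]
        simp only []
        rw [hcla, div_self (hne a), Complex.log_one, add_zero]
      · have h0a : (0:ℝ) ≤ a := ha01.1
        simp [h0a, hq0]
      · intro t ht
        have hub : ((k:ℝ)+1)/N = a + 1/N := by rw [ha]; ring
        by_cases hta : t ≤ a
        · simp only [hta, if_true]
          exact hqe t ⟨ht.1, hta⟩
        · simp only [hta, if_false]
          push_neg at hta
          have htub : t ≤ a + 1/N := by
            have h5 := ht.2
            rw [show ((k+1:ℕ):ℝ) = (k:ℝ)+1 by push_cast; ring, hub] at h5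
            exact h5
          have hclt : cl t = t := by
            rw [hcl]
            simp only []
            rw [min_eq_left htub, max_eq_right hta.le]
          rw [hbr]
          simp only []
          rw [hclt, Complex.exp_add,
            Complex.exp_log (div_ne_zero (hne t) (hne a)),
            hqe a ⟨ha01.1, le_refl a⟩]
          rw [mul_div_assoc', mul_comm, mul_div_assoc, div_self (hne a), mul_one]
  obtain ⟨q, hqc, hq0, hqe⟩ := main N le_rfl
  refine ⟨q, hqc, hq0, ?_⟩
  intro t ht
  apply hqe
  rwa [div_self (ne_of_gt hNpos)]
end





lemma aux_monodromy {X : Type*} [TopologicalSpace X] {f : X → ℂ} (hf : Continuous f)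
    (hne : ∀ x, f x ≠ 0) {x₀ x₁ : X} {p₀ p₁ : Path x₀ x₁} (H : Path.Homotopy p₀ p₁)
    (c : ℂ) {q₀ q₁ : ℝ → ℂ} (hq₀c : Continuous q₀) (hq₁c : Continuous q₁)
    (h00 : q₀ 0 = c) (h10 : q₁ 0 = c)
    (he₀ : ∀ t ∈ Icc (0:ℝ) 1, Complex.exp (q₀ t) = f (p₀.extend t))
    (he₁ : ∀ t ∈ Icc (0:ℝ) 1, Complex.exp (q₁ t) = f (p₁.extend t)) :
    q₀ 1 = q₁ 1 := by
  classical
  set G : I × I → ℂ := fun z => f (H z) with hG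
  have hGc : Continuous G := hf.comp H.continuous
  have hGne : ∀ z, G z ≠ 0 := fun z => hne _
  -- min modulus
  obtain ⟨z₀, -, hmin⟩ := isCompact_univ.exists_isMinOn (univ_nonempty) hGc.norm.continuousOn
  set ε : ℝ := ‖G z₀‖ with hε
  have hεpos : 0 < ε := norm_pos_iff.mpr (hGne z₀)
  have hminle : ∀ z, ε ≤ ‖G z‖ := fun z => hmin (mem_univ z)
  -- uniform continuity
  have huc : UniformContinuous G := CompactSpace.uniformContinuous_of_continuous hGc
  rw [Metric.uniformContinuous_iff] at huc
  obtain ⟨δ, hδpos, hδ⟩ := huc ε hεpos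
  -- the family of paths
  set P : I → ℝ → ℂ := fun s t => G (s, Set.projIcc 0 1 zero_le_one t) with hP
  have hPc : ∀ s, Continuous (P s) :=
    fun s => hGc.comp (continuous_const.prodMk continuous_projIcc)
  have hPne : ∀ s t, P s t ≠ 0 := fun s t => hGne _
  have hP0 : ∀ s, P s 0 = f x₀ := by
    intro s
    simp only [hP, hG]
    rw [Set.projIcc_left]
    rw [show H (s, ⟨0, le_refl 0, zero_le_one⟩) = x₀ from H.source s]
  have hP1 : ∀ s, P s 1 = f x₁ := by
    intro s
    simp only [hP, hG]
    rw [Set.projIcc_right]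
    rw [show H (s, ⟨1, zero_le_one, le_refl 1⟩) = x₁ from H.target s]
  have hc0 : Complex.exp c = f x₀ := by
    rw [← h00]
    have := he₀ 0 (by norm_num)
    rwa [Path.extend_zero] at this
  -- chosen lifts
  have hex : ∀ s : I, ∃ q : ℝ → ℂ, Continuous q ∧ q 0 = c ∧
      ∀ t ∈ Icc (0:ℝ) 1, Complex.exp (q t) = P s t := by
    intro s
    exact aux_lift_exists (hPc s) (hPne s) c (by rw [hc0, hP0])
  choose L hLc hL0 hLe using hex
  set E : I → ℂ := fun s => L s 1 with hE
  -- local constancy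
  have key : ∀ s s' : I, dist s s' < δ → E s = E s' := by
    intro s s' hss
    have hclose : ∀ t : I, dist (G (s', t)) (G (s, t)) < ε := by
      intro t
      apply hδ
      calc dist ((s',t) : I × I) ((s,t) : I × I) = dist s' s := by
            rw [Prod.dist_eq]; simp [max_eq_left dist_nonneg]
        _ < δ := by rwa [dist_comm]
    have hdist : ∀ t : ℝ, dist (P s' t) (P s t) < ‖P s t‖ :=
      fun t => lt_of_lt_of_le (hclose _) (hminle _)
    have hslit : ∀ t : ℝ, P s' t / P s t ∈ Complex.slitPlane :=
      fun t => aux_div_slit (hPne s t) (hdist t)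
    set q' : ℝ → ℂ := fun t => L s t + Complex.log (P s' t / P s t) with hq'
    have hq'c : Continuous q' := by
      refine (hLc s).add ?_
      rw [continuous_iff_continuousAt]
      intro t
      exact (((hPc s').continuousAt).div ((hPc s).continuousAt) (hPne s t)).clog (hslit t)
    have hq'0 : q' 0 = c := by
      rw [hq']
      simp only []
      rw [hP0, hP0, div_self (hne x₀), Complex.log_one, add_zero, hL0]
    have hq'e : ∀ t ∈ Icc (0:ℝ) 1, Complex.exp (q' t) = P s' t := by
      intro t ht
      rw [hq']
      simp only []
      rw [Complex.exp_add, Complex.exp_log (div_ne_zero (hPne s' t) (hPne s t)), hLe s t ht]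
      rw [mul_div_assoc', mul_comm, mul_div_assoc, div_self (hPne s t), mul_one]
    have := aux_lift_unique hq'c (hLc s') (by rw [hq'0, hL0])
      (fun t ht => by rw [hq'e t ht, hLe s' t ht])
    rw [hE]
    simp only []
    rw [← this, hq']
    simp only []
    rw [hP1, hP1, div_self (hne x₁), Complex.log_one, add_zero]
  -- chain from 0 to 1
  obtain ⟨n, hn⟩ := exists_nat_one_div_lt hδpos
  set N : ℕ := n + 1 with hN
  have hNpos : (0:ℝ) < N := by positivity
  have hNδ : (1:ℝ)/N < δ := by rw [hN]; push_cast; exact hn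
  have hmem : ∀ k : ℕ, k ≤ N → ((k:ℝ)/N) ∈ Icc (0:ℝ) 1 := by
    intro k hk
    exact ⟨by positivity, by rw [div_le_one hNpos]; exact_mod_cast hk⟩
  have chain : ∀ k : ℕ, (hk : k ≤ N) → E 0 = E ⟨(k:ℝ)/N, hmem k hk⟩ := by
    intro k
    induction k with
    | zero =>
      intro hk
      congr 1
      apply Subtype.ext
      simp
    | succ k ih =>
      intro hk
      rw [ih (Nat.le_of_succ_le hk)]
      apply key
      rw [Subtype.dist_eq]
      simp only [Real.dist_eq]
      have hh : ((k:ℝ) / (N:ℝ) - ((k + 1 : ℕ):ℝ) / (N:ℝ)) = -(1/(N:ℝ)) := by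
        push_cast; ring
      rw [hh, abs_neg, abs_of_pos (one_div_pos.mpr hNpos)]
      exact hNδ
  have hE01 : E 0 = E 1 := by
    rw [chain N le_rfl]
    congr 1
    apply Subtype.ext
    simp only []
    rw [div_self (ne_of_gt hNpos)]
    rfl
  -- identify q₀ 1 with E 0 and q₁ 1 with E 1
  have hPp₀ : ∀ t : ℝ, P 0 t = f (p₀.extend t) := by
    intro t
    simp only [hP, hG]
    simp only [Path.extend, Set.IccExtend, Function.comp_apply]
    exact congrArg f (H.apply_zero _)
  have hPp₁ : ∀ t : ℝ, P 1 t = f (p₁.extend t) := by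
    intro t
    simp only [hP, hG]
    simp only [Path.extend, Set.IccExtend, Function.comp_apply]
    exact congrArg f (H.apply_one _)
  have h0 : q₀ 1 = E 0 :=
    aux_lift_unique hq₀c (hLc 0) (by rw [h00, hL0])
      (fun t ht => by rw [he₀ t ht, hLe 0 t ht, hPp₀])
  have h1 : q₁ 1 = E 1 :=
    aux_lift_unique hq₁c (hLc 1) (by rw [h10, hL0])
      (fun t ht => by rw [he₁ t ht, hLe 1 t ht, hPp₁])
  rw [h0, h1, hE01]



/-- Main work: a holomorphic logarithm of a nonvanishing holomorphic function on a
simply connected open set. -/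
lemma aux_exists_log (U : Set ℂ) (hU : IsOpen U)
    (hUs : SimplyConnectedSpace U)
    (f : ℂ → ℂ) (hf : DifferentiableOn ℂ f U) (hne : ∀ z ∈ U, f z ≠ 0) :
    ∃ G : ℂ → ℂ, DifferentiableOn ℂ G U ∧ ∀ z ∈ U, Complex.exp (G z) = f z := by
  classical
  haveI := hUs
  haveI : PathConnectedSpace U := inferInstance
  set fr : U → ℂ := fun x => f ↑x with hfr
  have hfrc : Continuous fr := (hf.continuousOn).restrict
  have hfrne : ∀ x : U, fr x ≠ 0 := fun x => hne _ x.2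
  obtain ⟨x₀⟩ : Nonempty U := PathConnectedSpace.nonempty
  set c₀ : ℂ := Complex.log (f ↑x₀) with hc₀
  have hc₀e : Complex.exp c₀ = f ↑x₀ := Complex.exp_log (hne _ x₀.2)
  -- chosen lifts along chosen paths
  have hexg : ∀ x : U, ∃ q : ℝ → ℂ, Continuous q ∧ q 0 = c₀ ∧
      ∀ t ∈ Icc (0:ℝ) 1, Complex.exp (q t) = fr ((PathConnectedSpace.somePath x₀ x).extend t) := by
    intro x
    refine aux_lift_exists (hfrc.comp (Path.continuous_extend _)) (fun t => hfrne _) c₀ ?_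
    show Complex.exp c₀ = fr ((PathConnectedSpace.somePath x₀ x).extend 0)
    rw [Path.extend_zero, hc₀e]
  choose Q hQc hQ0 hQe using hexg
  set g : U → ℂ := fun x => Q x 1 with hg
  -- any lift along any path computes g
  have huniq : ∀ (x : U) (p : Path x₀ x) (q : ℝ → ℂ), Continuous q → q 0 = c₀ →
      (∀ t ∈ Icc (0:ℝ) 1, Complex.exp (q t) = fr (p.extend t)) → q 1 = g x := by
    intro x p q hqc hq0 hqe
    obtain ⟨H⟩ := SimplyConnectedSpace.paths_homotopic p (PathConnectedSpace.somePath x₀ x)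
    exact aux_monodromy hfrc hfrne H c₀ hqc (hQc x) hq0 (hQ0 x) hqe (hQe x)
  have hge : ∀ x : U, Complex.exp (g x) = fr x := by
    intro x
    have := hQe x 1 (by norm_num)
    rwa [Path.extend_one] at this
  -- local formula
  have hloc : ∀ x : U, ∃ r > 0, Metric.ball (↑x : ℂ) r ⊆ U ∧
      ∀ w ∈ Metric.ball (↑x : ℂ) r, ∀ hw : w ∈ U,
        g ⟨w, hw⟩ = g x + Complex.log (f w / f ↑x) := by
    intro x
    obtain ⟨r₁, hr₁pos, hr₁⟩ := Metric.isOpen_iff.mp hU ↑x x.2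
    have hcont : ContinuousAt f ↑x := (hf.continuousOn.continuousAt (hU.mem_nhds x.2))
    obtain ⟨r₂, hr₂pos, hr₂⟩ := Metric.continuousAt_iff.mp hcont ‖f ↑x‖
      (norm_pos_iff.mpr (hne _ x.2))
    refine ⟨min r₁ r₂, lt_min hr₁pos hr₂pos, fun w hw =>
      hr₁ (Metric.ball_subset_ball (min_le_left _ _) hw), ?_⟩
    intro w hwball hw
    -- clamped segment from x to w
    set sg : ℝ → ℂ := fun u => ↑x + (((max 0 (min u 1) : ℝ)) : ℂ) * (w - ↑x) with hsg
    have hsgc : Continuous sg := by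
      apply continuous_const.add
      exact (Complex.continuous_ofReal.comp
        ((continuous_const.max (continuous_id.min continuous_const)))).mul continuous_const
    have hsgball : ∀ u, sg u ∈ Metric.ball (↑x : ℂ) (min r₁ r₂) := by
      intro u
      rcases eq_or_ne w ↑x with hwx | hwx
      · simpa [hsg, hwx] using hwball
      · simp only [hsg, Metric.mem_ball, dist_eq_norm, add_sub_cancel_left, norm_mul,
          Complex.norm_real, Real.norm_eq_abs]
        have h2 : |max 0 (min u 1)| ≤ 1 := by
          rw [_root_.abs_of_nonneg (le_max_left (0:ℝ) (min u 1))]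
          exact max_le (zero_le_one) (min_le_right _ _)
        have h3 : ‖w - ↑x‖ < min r₁ r₂ := by rwa [Metric.mem_ball, dist_eq_norm] at hwball
        calc |max 0 (min u 1)| * ‖w - ↑x‖ ≤ 1 * ‖w - ↑x‖ := by
              apply mul_le_mul_of_nonneg_right h2 (norm_nonneg _)
          _ < min r₁ r₂ := by rwa [one_mul]
    have hsgU : ∀ u, sg u ∈ U := fun u =>
      hr₁ (Metric.ball_subset_ball (min_le_left _ _) (hsgball u))
    have hsgdist : ∀ u, dist (f (sg u)) (f ↑x) < ‖f ↑x‖ := by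
      intro u
      apply hr₂
      exact lt_of_lt_of_le (Metric.mem_ball.mp (hsgball u)) (min_le_right _ _)
    have hsgslit : ∀ u, f (sg u) / f ↑x ∈ Complex.slitPlane :=
      fun u => aux_div_slit (hne _ x.2) (hsgdist u)
    have hsg0 : sg 0 = ↑x := by rw [hsg]; norm_num
    have hsg1 : sg 1 = w := by rw [hsg]; norm_num
    -- path in U along the segment
    set sp : Path x (⟨w, hw⟩ : U) :=
      { toFun := fun t => ⟨sg t, hsgU t⟩
        continuous_toFun := (hsgc.comp continuous_subtype_val).subtype_mk _
        source' := Subtype.ext (by simpa using hsg0)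
        target' := Subtype.ext (by simpa using hsg1) }
    set p' : Path x₀ (⟨w, hw⟩ : U) := (PathConnectedSpace.somePath x₀ x).trans sp with hp'
    -- explicit lift of fr ∘ p'.extend
    set br : ℝ → ℂ := fun t => g x + Complex.log (f (sg (2*t - 1)) / f ↑x) with hbr
    have hbrc : Continuous br := by
      refine continuous_const.add ?_
      rw [continuous_iff_continuousAt]
      intro t
      have hr : ContinuousAt (fun t : ℝ => f (sg (2*t - 1)) / f ↑x) t := by
        apply ContinuousAt.div_const
        apply ContinuousAt.comp
        · exact hf.continuousOn.continuousAt (hU.mem_nhds (hsgU _))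
        · exact (hsgc.comp ((continuous_const.mul continuous_id).sub continuous_const)).continuousAt
      exact hr.clog (hsgslit _)
    set q' : ℝ → ℂ := fun t => if t ≤ 1/2 then Q x (2*t) else br t with hq'
    have hq'c : Continuous q' := by
      refine Continuous.if_le ((hQc x).comp (continuous_const.mul continuous_id)) hbrc
        continuous_id continuous_const ?_
      intro t (ht : t = 1/2)
      rw [ht, hbr]
      simp only []
      rw [show 2 * (1/2 : ℝ) - 1 = 0 by norm_num, hsg0,
        div_self (hne _ x.2), Complex.log_one, add_zero]
      norm_num
      rfl
    have hq'0 : q' 0 = c₀ := by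
      rw [hq']
      simp only []
      rw [if_pos (by norm_num : (0:ℝ) ≤ 1/2), mul_zero, hQ0]
    have hq'e : ∀ t ∈ Icc (0:ℝ) 1, Complex.exp (q' t) = fr (p'.extend t) := by
      intro t ht
      have htI : t ∈ Icc (0:ℝ) 1 := ht
      rw [Path.extend_apply p' htI, hp', Path.trans_apply]
      rw [hq']
      simp only []
      by_cases h2 : t ≤ 1/2
      · rw [if_pos h2, dif_pos h2]
        have h2t : (2*t) ∈ Icc (0:ℝ) 1 := ⟨by linarith [htI.1], by linarith⟩
        rw [hQe x (2*t) h2t, Path.extend_apply _ h2t]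
      · rw [if_neg h2, dif_neg h2]
        rw [hbr]
        simp only []
        rw [Complex.exp_add, hge x,
          Complex.exp_log (div_ne_zero (hne _ (hsgU _)) (hne _ x.2))]
        show f ↑x * (f (sg (2*t - 1)) / f ↑x) = _
        rw [mul_div_assoc', mul_comm, mul_div_assoc, div_self (hne _ x.2), mul_one]
        rfl
    have := huniq _ p' q' hq'c hq'0 hq'e
    rw [← this, hq']
    simp only []
    rw [if_neg (by norm_num : ¬ (1:ℝ) ≤ 1/2), hbr]
    simp only []
    rw [show 2*(1:ℝ) - 1 = 1 by norm_num, hsg1]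
  -- define the global function and prove differentiability
  refine ⟨fun z => if hz : z ∈ U then g ⟨z, hz⟩ else 0, ?_, ?_⟩
  · intro z hz
    obtain ⟨r, hrpos, hrU, hrf⟩ := hloc ⟨z, hz⟩
    have heq : (fun w => if hw : w ∈ U then g ⟨w, hw⟩ else 0)
        =ᶠ[nhds z] (fun w => g ⟨z, hz⟩ + Complex.log (f w / f z)) := by
      filter_upwards [Metric.ball_mem_nhds z hrpos] with w hwball
      rw [dif_pos (hrU hwball)]
      exact hrf w hwball (hrU hwball)
    have hdiff : DifferentiableAt ℂ (fun w => g ⟨z, hz⟩ + Complex.log (f w / f z)) z := by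
      apply DifferentiableAt.add (differentiableAt_const _)
      apply DifferentiableAt.clog
      · exact (hf.differentiableAt (hU.mem_nhds hz)).div_const _
      · rw [div_self (hne _ hz)]
        exact Complex.one_mem_slitPlane
    exact (hdiff.congr_of_eventuallyEq heq).differentiableWithinAt
  · intro z hz
    simp only [dif_pos hz]
    exact hge ⟨z, hz⟩


open Complex

theorem exists_holomorphic_cos_sin (U : Set ℂ) (hU : IsOpen U) (hUc : IsConnected U)
    (hUs : SimplyConnectedSpace U)
    (a₀ a₁ : ℂ → ℂ) (h₀ : DifferentiableOn ℂ a₀ U) (h₁ : DifferentiableOn ℂ a₁ U)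
    (hsum : ∀ z ∈ U, a₀ z ^ 2 + a₁ z ^ 2 = 1) :
    ∃ γ : ℂ → ℂ, DifferentiableOn ℂ γ U ∧
      ∀ z ∈ U, Complex.cos (γ z) = a₀ z ∧ Complex.sin (γ z) = a₁ z := by
  classical
  set f : ℂ → ℂ := fun z => a₀ z + Complex.I * a₁ z with hfdef
  have hfd : DifferentiableOn ℂ f U := h₀.add ((differentiableOn_const _).mul h₁)
  have hinv : ∀ z ∈ U, f z * (a₀ z - Complex.I * a₁ z) = 1 := by
    intro z hz
    simp only [hfdef]
    linear_combination hsum z hz - (a₁ z)^2 * Complex.I_sq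
  have hne : ∀ z ∈ U, f z ≠ 0 := by
    intro z hz h0
    have := hinv z hz
    rw [h0, zero_mul] at this
    exact zero_ne_one this
  obtain ⟨G, hGd, hGe⟩ := aux_exists_log U hU hUs f hfd hne
  refine ⟨fun z => -Complex.I * G z, (differentiableOn_const _).mul hGd, ?_⟩
  intro z hz
  have h1 : Complex.exp (-Complex.I * G z * Complex.I) = f z := by
    have harg : -Complex.I * G z * Complex.I = G z := by
      linear_combination (-(G z)) * Complex.I_sq
    rw [harg]
    exact hGe z hz
  have h2 : Complex.exp (-(-Complex.I * G z) * Complex.I) = a₀ z - Complex.I * a₁ z := by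
    have harg : -(-Complex.I * G z) * Complex.I = -(G z) := by
      linear_combination (G z) * Complex.I_sq
    rw [harg, Complex.exp_neg, hGe z hz]
    exact inv_eq_of_mul_eq_one_right (hinv z hz)
  constructor
  · rw [Complex.cos, h1, h2, hfdef]
    ring
  · rw [Complex.sin, h1, h2, hfdef]
    simp only []
    linear_combination (-(a₁ z)) * Complex.I_sq
end

section
/- Let h : ℂ → ℂ be entire with h(z) = Σ (-1)^m z^m/(2m+1)! (so h(z²)·z = sin z). Then h(z) = 0 if and only if z = π²n² for some nonzero integer n. -/
open Complex

/-- The entire function `h(z) = Σ (-1)^m z^m/(2m+1)!`, so that `h(z²)·z = sin z`. -/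
noncomputable def sinDiv (z : ℂ) : ℂ :=
  ∑' m : ℕ, ((-1 : ℂ) ^ m / ((2 * m + 1).factorial : ℂ)) * z ^ m

lemma sinDiv_sq_mul (w : ℂ) : sinDiv (w ^ 2) * w = Complex.sin w := by
  rw [sinDiv, ← tsum_mul_right, Complex.sin_eq_tsum]
  congr 1; ext m
  rw [← pow_mul]
  ring

lemma sinDiv_zero : sinDiv 0 = 1 := by
  rw [sinDiv, tsum_eq_single 0 (by intro m hm; simp [zero_pow hm])]
  simp

theorem sinDiv_eq_zero_iff (z : ℂ) :
    sinDiv z = 0 ↔ ∃ n : ℤ, n ≠ 0 ∧ z = ((Real.pi : ℂ) ^ 2 * (n : ℂ) ^ 2) := by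
  constructor
  · intro h
    obtain ⟨w, hw⟩ := Complex.isAlgClosed.exists_pow_nat_eq z two_pos
    have hz : z ≠ 0 := by
      intro hz0; rw [hz0, sinDiv_zero] at h; exact one_ne_zero h
    have hwne : w ≠ 0 := fun h0 => hz (by simp [← hw, h0])
    have hsin : Complex.sin w = 0 := by
      rw [← sinDiv_sq_mul, hw, h, zero_mul]
    obtain ⟨k, hk⟩ := Complex.sin_eq_zero_iff.mp hsin
    refine ⟨k, ?_, ?_⟩
    · rintro rfl; simp at hk; exact hwne hk
    · rw [← hw, hk]; ring
  · rintro ⟨n, hn, rfl⟩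
    have hw : ((n : ℂ) * Real.pi) ^ 2 = (Real.pi : ℂ) ^ 2 * (n : ℂ) ^ 2 := by ring
    have := sinDiv_sq_mul ((n : ℂ) * Real.pi)
    rw [hw, Complex.sin_int_mul_pi] at this
    have hne : (n : ℂ) * Real.pi ≠ 0 := by
      apply mul_ne_zero
      · exact_mod_cast hn
      · exact_mod_cast Real.pi_ne_zero
    exact (mul_eq_zero.mp this).resolve_right hne
end
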